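/- Let X be a real N×d matrix of rank r, with singular values σ_1 ≥ σ_2 ≥ ... ≥ σ_r > 0, and let k ≤ r. Let S be a random k-element subset of the column indices {1,...,d} drawn by volume sampling, i.e., P(S = T) ∝ det(X_{:T}ᵀ X_{:T}) over all k-element subsets T, where X_{:T} is the submatrix of X formed by the columns indexed by T. For a subset T of column indices, let Π_T X denote the matrix whose i-th column is the orthogonal projection of the i-th column of X onto the linear span of the columns of X indexed by T. Then E[ ‖X − Π_S X‖_Fr² ] ≤ (k+1) Σ_{j=k+1}^{r} σ_j², i.e., the expected Frobenius-norm approximation error under volume sampling is at most (k+1) times the error ‖X − Π_k X‖_Fr² of the best rank-k approximation of X. -/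

import Mathlib

open Matrix Finset
noncomputable section

/-- The `j`-th column of `X`, as a vector of Euclidean space. -/
def col {N d : ℕ} (X : Matrix (Fin N) (Fin d) ℝ) (j : Fin d) : EuclideanSpace ℝ (Fin N) :=
  (WithLp.equiv 2 (Fin N → ℝ)).symm (fun a => X a j)

/-- `‖X − Π_T X‖_Fr²`: the sum over all columns of the squared distance of the column to
the span of the columns of `X` indexed by `T`. -/
def projErr {N d : ℕ} (X : Matrix (Fin N) (Fin d) ℝ) (T : Finset (Fin d)) : ℝ :=
  ∑ j, ‖_root_.col X j -
    (Submodule.orthogonalProjectionOnto (Submodule.span ℝ (_root_.col X '' ↑T)) (_root_.col X j) :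
      EuclideanSpace ℝ (Fin N))‖ ^ 2

/-- The Gram determinant `det(X_{:T}ᵀ X_{:T})` of the columns of `X` indexed by `T`. -/
def gramDet {N d : ℕ} (X : Matrix (Fin N) (Fin d) ℝ) (T : Finset (Fin d)) : ℝ :=
  (((X.submatrix id (fun t : T => (t : Fin d))))ᵀ *
    (X.submatrix id (fun t : T => (t : Fin d)))).det


variable {n : Type*} [Fintype n] [LinearOrder n] {k : ℕ}

/-- the increasing enumeration of a k-subset -/
def es (S : {S : Finset n // S ∈ powersetCard k (univ : Finset n)}) : Fin k → n :=
  S.1.orderEmbOfFin ((Finset.mem_powersetCard.mp S.2).2)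

lemma es_inj (S) : Function.Injective (es (n := n) (k := k) S) :=
  (S.1.orderEmbOfFin _).injective

lemma es_mem (S) (i : Fin k) : es (n := n) S i ∈ S.1 := Finset.orderEmbOfFin_mem _ _ _

lemma image_es (S) : Finset.image (es (n := n) (k := k) S) univ = S.1 := by
  ext x
  simp only [Finset.mem_image, Finset.mem_univ, true_and]
  constructor
  · rintro ⟨i, rfl⟩; exact es_mem S i
  · intro hx
    have : x ∈ Set.range (es S) := by
      rw [show Set.range (es S) = ↑S.1 from Finset.range_orderEmbOfFin _ _]; exact hx
    exact this

lemma orderEmbOfFin_congr {S T : Finset n} (h : S = T) {hS : S.card = k} {hT : T.card = k}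
    (i : Fin k) : S.orderEmbOfFin hS i = T.orderEmbOfFin hT i := by subst h; rfl


/-- package an injective `p : Fin k → n` as (image, permutation) -/
def toPair (p : Fin k → n) (hp : Function.Injective p) :
    {S : Finset n // S ∈ powersetCard k (univ : Finset n)} × Equiv.Perm (Fin k) := by
  refine ⟨⟨univ.image p, ?_⟩, ?_⟩
  · exact Finset.mem_powersetCard.mpr ⟨Finset.subset_univ _,
      by rw [Finset.card_image_of_injective _ hp, Finset.card_univ, Fintype.card_fin]⟩
  · have hcard : (univ.image p).card = k := by
      rw [Finset.card_image_of_injective _ hp, Finset.card_univ, Fintype.card_fin]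
    refine Equiv.ofBijective (fun i => ((univ.image p).orderIsoOfFin hcard).symm
      ⟨p i, Finset.mem_image.mpr ⟨i, Finset.mem_univ _, rfl⟩⟩) ?_
    rw [← Finite.injective_iff_bijective]
    intro a b hab
    apply hp
    have := congrArg (((univ.image p).orderIsoOfFin hcard)) hab
    simpa [Subtype.ext_iff] using this

lemma es_toPair (p : Fin k → n) (hp : Function.Injective p) (i : Fin k) :
    es (toPair p hp).1 ((toPair p hp).2 i) = p i := by
  simp only [toPair, Equiv.ofBijective_apply, es]
  rw [← Finset.coe_orderIsoOfFin_apply]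
  rw [OrderIso.apply_symm_apply]

lemma toPair_comp (S : {S : Finset n // S ∈ powersetCard k (univ : Finset n)})
    (τ : Equiv.Perm (Fin k)) (h : Function.Injective (es S ∘ τ)) :
    toPair (es S ∘ τ) h = (S, τ) := by
  have him : univ.image (es S ∘ ⇑τ) = S.1 := by
    rw [show es S ∘ ⇑τ = (es S) ∘ ⇑τ from rfl, ← Finset.image_image,
      Finset.image_univ_equiv, image_es]
  refine Prod.ext (Subtype.ext him) (Equiv.ext fun i => ?_)
  simp only [toPair, Equiv.ofBijective_apply]
  rw [OrderIso.symm_apply_eq]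
  refine Subtype.ext ?_
  rw [Finset.coe_orderIsoOfFin_apply]
  exact (orderEmbOfFin_congr him _).symm

theorem cauchy_binet (M : Matrix (Fin k) n ℝ) (N : Matrix n (Fin k) ℝ) :
    (M * N).det = ∑ S ∈ (powersetCard k (univ : Finset n)).attach,
      (M.submatrix id (es S)).det * (N.submatrix (es S) id).det := by
  classical
  -- Step a: expand det(M*N) over functions p : Fin k → n
  have ha : (M * N).det
      = ∑ p : Fin k → n, (∏ i, M i (p i)) * (N.submatrix p id).det := by
    have h0 : (M * N).det = Matrix.detRowAlternating (fun i => ∑ x : n, M i x • N x) := by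
      congr 1; ext i j; simp [Matrix.mul_apply]
    rw [h0]
    have h1 := (Matrix.detRowAlternating (R := ℝ) (n := Fin k)).toMultilinearMap.map_sum_finset
      (fun i x => M i x • N x) (fun _ => (univ : Finset n))
    simp only [AlternatingMap.coe_multilinearMap] at h1
    rw [h1, Fintype.piFinset_univ]
    refine Finset.sum_congr rfl fun p _ => ?_
    have h2 := (Matrix.detRowAlternating (R := ℝ) (n := Fin k)).toMultilinearMap.map_smul_univ
      (fun i => M i (p i)) (fun i => N (p i))
    simp only [AlternatingMap.coe_multilinearMap] at h2
    rw [h2, smul_eq_mul]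
    rfl
  rw [ha]
  -- Step b: kill non-injective p
  rw [← Finset.sum_filter_add_sum_filter_not univ (fun p : Fin k → n => Function.Injective p)]
  have hb : ∑ p ∈ univ.filter (fun p : Fin k → n => ¬ Function.Injective p),
      (∏ i, M i (p i)) * (N.submatrix p id).det = 0 := by
    refine Finset.sum_eq_zero fun p hp => ?_
    simp only [Finset.mem_filter, Function.Injective] at hp
    push_neg at hp
    obtain ⟨a, b, hab, hne⟩ : ∃ a b, p a = p b ∧ a ≠ b := by simpa [Function.Injective] using hp
    have : (N.submatrix p id).det = 0 :=
      Matrix.det_zero_of_row_eq hne (by ext j; simp [hab])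
    simp [this]
  rw [hb, add_zero]
  -- Step c: per subset, sum over permutations
  have hc : ∀ S, (M.submatrix id (es (n := n) (k := k) S)).det * (N.submatrix (es S) id).det
      = ∑ τ : Equiv.Perm (Fin k),
          (∏ i, M i (es S (τ i))) * (N.submatrix (es S ∘ τ) id).det := by
    intro S
    have hperm : ∀ τ : Equiv.Perm (Fin k), (N.submatrix (es S ∘ τ) id).det
        = (Equiv.Perm.sign τ : ℤ) * (N.submatrix (es S) id).det := by
      intro τ
      have : N.submatrix (es S ∘ τ) id = (N.submatrix (es S) id).submatrix τ id := by
        ext i j; simp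
      rw [this, Matrix.det_permute]
    simp only [hperm]
    have hdet : (M.submatrix id (es S)).det
        = ∑ τ : Equiv.Perm (Fin k), (Equiv.Perm.sign τ : ℤ) * ∏ i, M i (es S (τ i)) := by
      rw [← Matrix.det_transpose, Matrix.det_apply]
      refine Finset.sum_congr rfl fun τ _ => ?_
      rw [Units.smul_def, zsmul_eq_mul]
      congr 1
    rw [hdet, Finset.sum_mul]
    refine Finset.sum_congr rfl fun τ _ => by ring
  simp only [hc]
  -- Step d: bijection between injective maps and (subset, permutation) pairs
  rw [← Finset.sum_product']
  refine Finset.sum_bij'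
    (i := fun p (hp : p ∈ univ.filter fun p : Fin k → n => Function.Injective p) =>
      toPair p (by simpa using hp))
    (j := fun Sτ _ => es Sτ.1 ∘ Sτ.2) ?_ ?_ ?_ ?_ ?_
  · intro p hp; exact Finset.mem_product.mpr ⟨Finset.mem_attach _ _, Finset.mem_univ _⟩
  · intro Sτ _
    simp only [Finset.mem_filter, Finset.mem_univ, true_and]
    exact (es_inj Sτ.1).comp Sτ.2.injective
  · intro p hp
    funext i
    exact es_toPair p (by simpa using hp) i
  · rintro ⟨S, τ⟩ _
    exact toPair_comp S τ ((es_inj S).comp τ.injective)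
  · intro p hp
    have h : ∀ i, es (toPair p (by simpa using hp : Function.Injective p)).1
        ((toPair p (by simpa using hp)).2 i) = p i := es_toPair p _
    have h2 : es (toPair p (by simpa using hp : Function.Injective p)).1
        ∘ (toPair p (by simpa using hp)).2 = p := funext h
    simp only [h, h2]

section Spec
variable {N d : ℕ}


lemma gramDet_eq_sub (X : Matrix (Fin N) (Fin d) ℝ) (T : Finset (Fin d)) :
    gramDet X T = ((Xᵀ * X).submatrix (fun t : T => (t : Fin d)) (fun t : T => (t : Fin d))).det := by
  unfold gramDet
  congr 1


lemma det_sub_coe_eq_es {m : ℕ} (A : Matrix (Fin d) (Fin d) ℝ)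
    (S : {S : Finset (Fin d) // S ∈ powersetCard m (univ : Finset (Fin d))}) :
    ((A.submatrix (fun t : S.1 => (t : Fin d)) (fun t : S.1 => (t : Fin d)))).det
      = (A.submatrix (es S) (es S)).det := by
  have hcard : S.1.card = m := (Finset.mem_powersetCard.mp S.2).2
  let e : Fin m ≃ S.1 := (S.1.orderIsoOfFin hcard).toEquiv
  have h : A.submatrix (es S) (es S)
      = (A.submatrix (fun t : S.1 => (t : Fin d)) (fun t : S.1 => (t : Fin d))).submatrix e e := by
    ext i j
    simp [Matrix.submatrix_apply, e, ← Finset.coe_orderIsoOfFin_apply, es]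
  rw [h, Matrix.det_submatrix_equiv_self]

lemma prod_es {m : ℕ} (g : Fin d → ℝ)
    (S : {S : Finset (Fin d) // S ∈ powersetCard m (univ : Finset (Fin d))}) :
    ∏ i : Fin m, g (es S i) = ∏ j ∈ S.1, g j := by
  refine Finset.prod_nbij (es S) (fun a _ => es_mem S a) (fun a _ b _ h => es_inj S h)
    ?_ (fun a _ => rfl)
  intro x hx
  have hx' : x ∈ Set.range (es S) := by rw [show Set.range (es S) = ↑S.1 from Finset.range_orderEmbOfFin _ _]; exact hx
  obtain ⟨i, rfl⟩ := hx'
  exact Set.mem_image_of_mem _ (by simp)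

/-- Step 1: the spectral identity for sums of Gram determinants. -/
lemma sum_gramDet (X : Matrix (Fin N) (Fin d) ℝ) (σ : ℕ → ℝ) (v : Fin d → Fin d → ℝ)
    (hv_orth : ∀ i j, v i ⬝ᵥ v j = if i = j then (1 : ℝ) else 0)
    (hv_eig : ∀ j : Fin d, (Xᵀ * X) *ᵥ v j = (σ (j : ℕ) ^ 2) • v j) (m : ℕ) :
    ∑ T ∈ powersetCard m (univ : Finset (Fin d)), gramDet X T
      = ∑ U ∈ powersetCard m (univ : Finset (Fin d)), ∏ j ∈ U, σ (j : ℕ) ^ 2 := by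
  classical
  set V : Matrix (Fin d) (Fin d) ℝ := Matrix.of (fun i j : Fin d => v j i) with hV
  have hVtV : Vᵀ * V = 1 := by
    ext a b
    simpa [Matrix.mul_apply, dotProduct, Matrix.one_apply, hV] using hv_orth a b
  have hVVt : V * Vᵀ = 1 := mul_eq_one_comm.mp hVtV
  set W : Matrix (Fin d) (Fin d) ℝ := Matrix.diagonal (fun j : Fin d => σ (j : ℕ)) * Vᵀ with hW
  have hGV : (Xᵀ * X) * V = V * Matrix.diagonal (fun j : Fin d => σ (j : ℕ) ^ 2) := by
    ext x j
    have h1 := congrFun (hv_eig j) x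
    simp only [Matrix.mulVec, dotProduct, Pi.smul_apply, smul_eq_mul] at h1
    rw [Matrix.mul_apply, Matrix.mul_diagonal]
    simp only [hV, Matrix.of_apply]
    rw [h1]
    ring
  have hG : Xᵀ * X = Wᵀ * W := by
    have hWt : Wᵀ = V * Matrix.diagonal (fun j : Fin d => σ (j : ℕ)) := by
      rw [hW, Matrix.transpose_mul, Matrix.transpose_transpose, Matrix.diagonal_transpose]
    have hDD : Matrix.diagonal (fun j : Fin d => σ (j : ℕ)) *
        Matrix.diagonal (fun j : Fin d => σ (j : ℕ))
        = Matrix.diagonal (fun j : Fin d => σ (j : ℕ) ^ 2) := by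
      rw [Matrix.diagonal_mul_diagonal]
      congr 1
      funext j
      ring
    calc Xᵀ * X = (Xᵀ * X) * (V * Vᵀ) := by rw [hVVt, Matrix.mul_one]
      _ = ((Xᵀ * X) * V) * Vᵀ := (Matrix.mul_assoc _ _ _).symm
      _ = V * Matrix.diagonal (fun j : Fin d => σ (j : ℕ) ^ 2) * Vᵀ := by rw [hGV]
      _ = Wᵀ * W := by
          rw [hWt, hW, Matrix.mul_assoc, Matrix.mul_assoc, ← Matrix.mul_assoc
            (Matrix.diagonal _), hDD]
  rw [← Finset.sum_attach (powersetCard m (univ : Finset (Fin d))) (gramDet X),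
      ← Finset.sum_attach (powersetCard m (univ : Finset (Fin d)))
        (fun U => ∏ j ∈ U, σ (j : ℕ) ^ 2)]
  have key : ∀ T : {S // S ∈ powersetCard m (univ : Finset (Fin d))},
      gramDet X T.1 = ∑ U ∈ (powersetCard m (univ : Finset (Fin d))).attach,
        ((∏ u : Fin m, σ ((es U u : Fin d) : ℕ)) * (Vᵀ.submatrix (es U) (es T)).det) ^ 2 := by
    intro T
    rw [gramDet_eq_sub, det_sub_coe_eq_es, hG]
    have h2 : (Wᵀ * W).submatrix (es T) (es T)
        = (W.submatrix id (es T))ᵀ * (W.submatrix id (es T)) := by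
      ext i j; simp [Matrix.mul_apply]
    rw [h2, cauchy_binet]
    refine Finset.sum_congr rfl fun U _ => ?_
    have hM : (W.submatrix id (es T))ᵀ.submatrix id (es U) = (W.submatrix (es U) (es T))ᵀ := rfl
    have hN : (W.submatrix id (es T)).submatrix (es U) id = W.submatrix (es U) (es T) := rfl
    rw [hM, hN, Matrix.det_transpose]
    have hWsub : W.submatrix (es U) (es T)
        = Matrix.diagonal (fun u : Fin m => σ ((es U u : Fin d) : ℕ)) *
            (Vᵀ.submatrix (es U) (es T)) := by
      ext u i
      simp [hW, Matrix.submatrix_apply, Matrix.diagonal_mul]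
    rw [hWsub, Matrix.det_mul, Matrix.det_diagonal]
    ring
  simp only [key]
  rw [Finset.sum_comm]
  refine Finset.sum_congr rfl fun U _ => ?_
  have hprod : (Vᵀ.submatrix (es U) id) * (V.submatrix id (es U))
      = (1 : Matrix (Fin m) (Fin m) ℝ) := by
    ext a b
    have h := congrFun (congrFun hVtV (es U a)) (es U b)
    simp only [Matrix.mul_apply] at h ⊢
    simp only [Matrix.submatrix_apply, id_eq]
    rw [h, Matrix.one_apply, Matrix.one_apply]
    simp [(es_inj U).eq_iff]
  have hCB := cauchy_binet (M := Vᵀ.submatrix (es U) id) (N := V.submatrix id (es U))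
  rw [hprod, Matrix.det_one] at hCB
  have hterm : ∀ T : {S // S ∈ powersetCard m (univ : Finset (Fin d))},
      ((Vᵀ.submatrix (es U) id).submatrix id (es T)).det *
        ((V.submatrix id (es U)).submatrix (es T) id).det
      = (Vᵀ.submatrix (es U) (es T)).det ^ 2 := by
    intro T
    have h1 : (Vᵀ.submatrix (es U) id).submatrix id (es T) = Vᵀ.submatrix (es U) (es T) := rfl
    have h2 : (V.submatrix id (es U)).submatrix (es T) id
        = (Vᵀ.submatrix (es U) (es T))ᵀ := rfl
    rw [h1, h2, Matrix.det_transpose]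
    ring
  simp only [hterm] at hCB
  have : ∑ T ∈ (powersetCard m (univ : Finset (Fin d))).attach,
      ((∏ u : Fin m, σ ((es U u : Fin d) : ℕ)) * (Vᵀ.submatrix (es U) (es T)).det) ^ 2
      = (∏ u : Fin m, σ ((es U u : Fin d) : ℕ)) ^ 2 *
        ∑ T ∈ (powersetCard m (univ : Finset (Fin d))).attach,
          (Vᵀ.submatrix (es U) (es T)).det ^ 2 := by
    rw [Finset.mul_sum]
    exact Finset.sum_congr rfl fun T _ => by ring
  rw [this, ← hCB, mul_one, ← prod_es (fun j => σ (j : ℕ) ^ 2) U, ← Finset.prod_pow]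

end Spec

section Pivot
variable {E : Type*} [NormedAddCommGroup E] [InnerProductSpace ℝ E] [FiniteDimensional ℝ E]
variable {ι : Type*} [DecidableEq ι]

lemma gram_insert (f : ι → E) (T : Finset ι) (j : ι) (hj : j ∉ T) :
    (Matrix.of fun a b : (insert j T : Finset ι) =>
        (inner ℝ (f (a : ι)) (f (b : ι)) : ℝ)).det
      = (Matrix.of fun a b : T => (inner ℝ (f (a : ι)) (f (b : ι)) : ℝ)).det *
        ‖f j - (Submodule.orthogonalProjectionOnto (Submodule.span ℝ (f '' ↑T)) (f j) : E)‖ ^ 2 := by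
  classical
  set K := Submodule.span ℝ (f '' ↑T) with hK
  set w := f j - (Submodule.orthogonalProjectionOnto K (f j) : E) with hw
  have hw_orth : ∀ i : T, (inner ℝ w (f (i : ι)) : ℝ) = 0 := by
    intro i
    have h1 : w ∈ Kᗮ := K.sub_starProjection_mem_orthogonal (f j)
    have h2 : f (i : ι) ∈ K := Submodule.subset_span ⟨(i : ι), i.2, rfl⟩
    rw [real_inner_comm]
    exact (Submodule.mem_orthogonal K w).mp h1 _ h2
  obtain ⟨c, hc⟩ : ∃ c : T → ℝ, ∑ i : T, c i • f (i : ι)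
      = (Submodule.orthogonalProjectionOnto K (f j) : E) := by
    have hsub : f '' ↑T ⊆ Set.range (fun i : T => f (i : ι)) := by
      rintro x ⟨y, hy, rfl⟩
      exact ⟨⟨y, hy⟩, rfl⟩
    have hmem : (Submodule.orthogonalProjectionOnto K (f j) : E)
        ∈ Submodule.span ℝ (Set.range fun i : T => f (i : ι)) :=
      Submodule.span_mono hsub (SetLike.coe_mem _)
    exact (Submodule.mem_span_range_iff_exists_fun ℝ).mp hmem
  have hfj : f j = w + ∑ i : T, c i • f (i : ι) := by
    rw [hc, hw]; abel
  -- families g (with w) and h (with f j)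
  set g : Option T → E := fun o => o.elim w (fun i => f (i : ι)) with hg
  set h : Option T → E := fun o => o.elim (f j) (fun i => f (i : ι)) with hh
  set u : Option T → ℝ := fun o => o.elim 1 (fun _ => 0) with hu
  set cv : Option T → ℝ := fun o => o.elim 0 c with hcv
  set A : Matrix (Option T) (Option T) ℝ := 1 + Matrix.replicateCol Unit u * Matrix.replicateRow Unit cv with hA
  have hdetA : A.det = 1 := by
    rw [hA, Matrix.det_one_add_replicateCol_mul_replicateRow]
    simp [hcv, hu, dotProduct, Fintype.sum_option]
  have hha : ∀ a : Option T, h a = ∑ x : Option T, A a x • g x := by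
    intro a
    rw [Fintype.sum_option]
    cases a with
    | none =>
        simp only [hA, hh, hg, Matrix.add_apply, Matrix.one_apply, Matrix.replicateCol_apply,
          Matrix.replicateRow_apply, Matrix.mul_apply, hu, hcv]
        simp [Option.elim, hfj]
    | some i =>
        simp only [hA, hh, hg, Matrix.add_apply, Matrix.one_apply, Matrix.replicateCol_apply,
          Matrix.replicateRow_apply, Matrix.mul_apply, hu, hcv]
        simp [Option.elim, Finset.sum_ite_eq]
  have hmul : Matrix.of (fun a b : Option T => (inner ℝ (h a) (h b) : ℝ))
      = A * (Matrix.of fun a b : Option T => (inner ℝ (g a) (g b) : ℝ)) * Aᵀ := by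
    ext a b
    have lhs : (inner ℝ (h a) (h b) : ℝ)
        = ∑ x : Option T, ∑ y : Option T, A a x * A b y * inner ℝ (g x) (g y) := by
      rw [hha a, hha b, sum_inner]
      refine Finset.sum_congr rfl fun x _ => ?_
      rw [inner_sum]
      refine Finset.sum_congr rfl fun y _ => ?_
      rw [real_inner_smul_left, real_inner_smul_right]
      ring
    rw [Matrix.of_apply, lhs]
    simp only [Matrix.mul_apply, Matrix.transpose_apply, Matrix.of_apply, Finset.sum_mul,
      Finset.mul_sum]
    rw [Finset.sum_comm]
    refine Finset.sum_congr rfl fun x _ => Finset.sum_congr rfl fun y _ => by ring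
  -- block structure of the gram matrix of g
  have hblock : (Matrix.of fun a b : Option T => (inner ℝ (g a) (g b) : ℝ)).det
      = (Matrix.of fun a b : T => (inner ℝ (f (a : ι)) (f (b : ι)) : ℝ)).det * ‖w‖ ^ 2 := by
    have he : (Matrix.of fun a b : Option T => (inner ℝ (g a) (g b) : ℝ))
        = (Matrix.fromBlocks
            (Matrix.of fun a b : T => (inner ℝ (f (a : ι)) (f (b : ι)) : ℝ)) 0 0
            (Matrix.of fun _ _ : Unit => ‖w‖ ^ 2)).submatrix
          (Equiv.optionEquivSumPUnit.{0} _) (Equiv.optionEquivSumPUnit.{0} _) := by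
      ext a b
      cases a with
      | none =>
          cases b with
          | none => simp [hg, real_inner_self_eq_norm_sq]
          | some b => simp [hg, hw_orth b]
      | some a =>
          cases b with
          | none =>
              simp [hg]
              rw [real_inner_comm]
              exact hw_orth a
          | some b => simp [hg]
    rw [he, Matrix.det_submatrix_equiv_self, Matrix.det_fromBlocks_zero₂₁]
    congr 1
    rw [Matrix.det_unique]
    rfl
  -- index change between Option T and insert j T
  have he2 : ∃ e2 : Option T ≃ (insert j T : Finset ι),
      ∀ o : Option T, ((e2 o : ι)) = o.elim j (fun i => (i : ι)) := by
    refine ⟨⟨fun o => o.elim ⟨j, Finset.mem_insert_self _ _⟩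
        (fun i => ⟨(i : ι), Finset.mem_insert_of_mem i.2⟩),
      fun s => if h : (s : ι) ∈ T then some ⟨(s : ι), h⟩ else none, ?_, ?_⟩, ?_⟩
    · intro o
      cases o with
      | none => simp [hj]
      | some i => simp
    · intro s
      by_cases h : (s : ι) ∈ T
      · simp [h]
      · have : (s : ι) = j := by
          rcases Finset.mem_insert.mp s.2 with h1 | h1
          · exact h1
          · exact absurd h1 h
        simp only [dif_neg h]
        exact Subtype.ext this.symm
    · intro o
      cases o with
      | none => rfl
      | some i => rfl
  obtain ⟨e2, he2⟩ := he2
  have hins : (Matrix.of fun a b : (insert j T : Finset ι) =>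
      (inner ℝ (f (a : ι)) (f (b : ι)) : ℝ)).det
      = (Matrix.of fun a b : Option T => (inner ℝ (h a) (h b) : ℝ)).det := by
    rw [← Matrix.det_submatrix_equiv_self e2]
    congr 1
    ext a b
    simp only [Matrix.submatrix_apply, Matrix.of_apply, he2]
    cases a <;> cases b <;> simp [hh, Option.elim]
  rw [hins, hmul, Matrix.det_mul, Matrix.det_mul, hdetA, Matrix.det_transpose, hdetA,
    one_mul, mul_one, hblock]
end Pivot

section Combinatorics
open Finset

/-- double counting pairs (T, j∉T) vs ((k+1)-sets S, j∈S) -/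
lemma double_count {d k : ℕ} (F : Finset (Fin d) → ℝ) :
    ∑ T ∈ powersetCard k (univ : Finset (Fin d)), ∑ j ∈ Tᶜ, F (insert j T)
      = (k + 1 : ℝ) * ∑ S ∈ powersetCard (k+1) (univ : Finset (Fin d)), F S := by
  classical
  rw [← Finset.sum_sigma (powersetCard k (univ : Finset (Fin d))) (fun T => Tᶜ)
    (fun p => F (insert p.2 p.1))]
  have hR : ∀ S ∈ powersetCard (k+1) (univ : Finset (Fin d)),
      (∑ j ∈ S, F S) = (k + 1 : ℝ) * F S := by
    intro S hS
    rw [Finset.sum_const, Finset.mem_powersetCard_univ.mp hS, nsmul_eq_mul]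
    push_cast
    ring
  rw [show ((k : ℝ) + 1) * ∑ S ∈ powersetCard (k+1) (univ : Finset (Fin d)), F S
      = ∑ S ∈ powersetCard (k+1) (univ : Finset (Fin d)), ∑ j ∈ S, F S by
    rw [Finset.mul_sum]
    exact (Finset.sum_congr rfl hR).symm]
  rw [← Finset.sum_sigma (powersetCard (k+1) (univ : Finset (Fin d))) (fun S => S)
    (fun p => F p.1)]
  refine Finset.sum_nbij' (i := fun p => ⟨insert p.2 p.1, p.2⟩)
    (j := fun p => ⟨p.1.erase p.2, p.2⟩) ?_ ?_ ?_ ?_ ?_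
  · rintro ⟨T, j⟩ hp
    simp only [Finset.mem_sigma, Finset.mem_powersetCard_univ, Finset.mem_compl] at hp ⊢
    exact ⟨by rw [Finset.card_insert_of_notMem hp.2, hp.1], Finset.mem_insert_self _ _⟩
  · rintro ⟨S, j⟩ hp
    simp only [Finset.mem_sigma, Finset.mem_powersetCard_univ, Finset.mem_compl] at hp ⊢
    exact ⟨by rw [Finset.card_erase_of_mem hp.2, hp.1]; rfl, Finset.notMem_erase _ _⟩
  · rintro ⟨T, j⟩ hp
    simp only [Finset.mem_sigma, Finset.mem_powersetCard_univ, Finset.mem_compl] at hp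
    simp [Finset.erase_insert hp.2]
  · rintro ⟨S, j⟩ hp
    simp only [Finset.mem_sigma, Finset.mem_powersetCard_univ, Finset.mem_compl] at hp
    simp [Finset.insert_erase hp.2]
  · rintro ⟨T, j⟩ hp
    simp only [Finset.mem_sigma, Finset.mem_powersetCard_univ, Finset.mem_compl] at hp
    simp

/-- elementary symmetric bound: e_{k+1} ≤ (Σ_{k ≤ j < r} σ_j²) e_k -/
lemma esymm_step {d r k : ℕ} (σ : ℕ → ℝ) (hnn : ∀ j, 0 ≤ σ j)
    (hσ_zero : ∀ j : ℕ, r ≤ j → σ j = 0) (hrd : r ≤ d) :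
    ∑ U ∈ powersetCard (k+1) (univ : Finset (Fin d)), ∏ j ∈ U, σ (j : ℕ) ^ 2
      ≤ (∑ j ∈ Finset.Ico k r, σ j ^ 2) *
        ∑ T ∈ powersetCard k (univ : Finset (Fin d)), ∏ j ∈ T, σ (j : ℕ) ^ 2 := by
  classical
  set A := powersetCard (k+1) (univ : Finset (Fin d)) with hA
  set Agood := A.filter (fun U => ∀ j ∈ U, (j : Fin d).1 < r) with hAgood
  have hsplit : ∑ U ∈ A, ∏ j ∈ U, σ (j : ℕ) ^ 2 = ∑ U ∈ Agood, ∏ j ∈ U, σ (j : ℕ) ^ 2 := by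
    rw [hAgood, ← Finset.sum_filter_add_sum_filter_not A (fun U => ∀ j ∈ U, (j : Fin d).1 < r)]
    have : ∑ U ∈ A.filter (fun U => ¬ ∀ j ∈ U, (j : Fin d).1 < r),
        ∏ j ∈ U, σ (j : ℕ) ^ 2 = 0 := by
      refine Finset.sum_eq_zero fun U hU => ?_
      simp only [Finset.mem_filter] at hU
      push_neg at hU
      obtain ⟨j0, hj0U, hj0⟩ := hU.2
      exact Finset.prod_eq_zero hj0U (by rw [hσ_zero _ hj0]; ring)
    rw [this, add_zero]
  rw [hsplit]
  -- map each good U to (U.erase max, max)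
  have hkey : ∀ U ∈ Agood, U.Nonempty := by
    intro U hU
    simp only [hAgood, Finset.mem_filter, hA, Finset.mem_powersetCard_univ] at hU
    exact Finset.card_pos.mp (by omega)
  set B := (powersetCard k (univ : Finset (Fin d))) ×ˢ (Finset.Ico k r) with hB
  set φ : Finset (Fin d) → Finset (Fin d) × ℕ :=
    fun U => if h : U.Nonempty then (U.erase (U.max' h), (U.max' h : Fin d).1) else (∅, 0)
    with hφ
  have hmax_mem : ∀ (U : Finset (Fin d)) (h : U.Nonempty), U.max' h ∈ U :=
    fun U h => Finset.max'_mem U h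
  have hφ_mem : ∀ U ∈ Agood, φ U ∈ B := by
    intro U hU
    have hne := hkey U hU
    simp only [hAgood, Finset.mem_filter, hA, Finset.mem_powersetCard_univ] at hU
    set m := U.max' hne with hm
    have hmr : (m : ℕ) < r := hU.2 m (hmax_mem U hne)
    have hkm : k ≤ (m : ℕ) := by
      have hinj : Set.InjOn (fun x : Fin d => (x : ℕ)) ↑U := fun a _ b _ h => Fin.val_injective h
      have hsub : ∀ x ∈ U, (x : ℕ) ∈ Finset.range ((m : ℕ) + 1) := by
        intro x hx
        rw [Finset.mem_range]
        exact Nat.lt_succ_of_le (by exact_mod_cast Finset.le_max' U x hx)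
      have := Finset.card_le_card_of_injOn (fun x : Fin d => (x : ℕ)) hsub hinj
      rw [Finset.card_range, hU.1] at this
      omega
    simp only [hφ, dif_pos hne, hB, Finset.mem_product, Finset.mem_powersetCard_univ,
      Finset.mem_Ico]
    exact ⟨by rw [Finset.card_erase_of_mem (hmax_mem U hne), hU.1]; rfl, hkm, hmr⟩
  have hφ_inj : Set.InjOn φ ↑Agood := by
    intro U hU W hW h
    have hneU := hkey U (by simpa using hU)
    have hneW := hkey W (by simpa using hW)
    simp only [hφ, dif_pos hneU, dif_pos hneW, Prod.mk.injEq] at h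
    obtain ⟨h1, h2⟩ := h
    have hmm : U.max' hneU = W.max' hneW := Fin.val_injective h2
    rw [← Finset.insert_erase (hmax_mem U hneU), h1, hmm]
    exact Finset.insert_erase (hmax_mem W hneW)
  calc ∑ U ∈ Agood, ∏ j ∈ U, σ (j : ℕ) ^ 2
      = ∑ p ∈ Agood.image φ, (∏ j ∈ p.1, σ (j : ℕ) ^ 2) * σ p.2 ^ 2 := by
        rw [Finset.sum_image (fun a ha b hb h => hφ_inj ha hb h)]
        refine Finset.sum_congr rfl fun U hU => ?_
        have hne := hkey U hU
        simp only [hφ, dif_pos hne]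
        rw [← Finset.mul_prod_erase U _ (hmax_mem U hne)]
        ring
    _ ≤ ∑ p ∈ B, (∏ j ∈ p.1, σ (j : ℕ) ^ 2) * σ p.2 ^ 2 := by
        refine Finset.sum_le_sum_of_subset_of_nonneg ?_ ?_
        · intro p hp
          obtain ⟨U, hU, rfl⟩ := Finset.mem_image.mp hp
          exact hφ_mem U hU
        · intro p _ _
          exact mul_nonneg (Finset.prod_nonneg fun j _ => sq_nonneg _) (sq_nonneg _)
    _ = (∑ j ∈ Finset.Ico k r, σ j ^ 2) *
          ∑ T ∈ powersetCard k (univ : Finset (Fin d)), ∏ j ∈ T, σ (j : ℕ) ^ 2 := by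
        rw [hB, Finset.sum_product]
        dsimp only
        rw [← Finset.sum_mul_sum]
        exact mul_comm _ _

/-- positivity of the elementary symmetric denominator -/
lemma ek_pos {d r k : ℕ} (σ : ℕ → ℝ) (hσ_pos : ∀ j, j < r → 0 < σ j) (hk : k ≤ r)
    (hkd : k ≤ d) :
    0 < ∑ T ∈ powersetCard k (univ : Finset (Fin d)), ∏ j ∈ T, σ (j : ℕ) ^ 2 := by
  have hU0 : (Finset.univ.map (Fin.castLEEmb hkd)) ∈ powersetCard k (univ : Finset (Fin d)) := by
    rw [Finset.mem_powersetCard_univ, Finset.card_map, Finset.card_univ, Fintype.card_fin]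
  refine Finset.sum_pos' (fun T _ => Finset.prod_nonneg fun j _ => sq_nonneg _) ⟨_, hU0, ?_⟩
  refine Finset.prod_pos fun j hj => ?_
  rw [Finset.mem_map] at hj
  obtain ⟨i, _, rfl⟩ := hj
  have hval : ((Fin.castLEEmb hkd i : Fin d) : ℕ) = (i : ℕ) := rfl
  rw [hval]
  exact pow_pos (hσ_pos _ (lt_of_lt_of_le i.2 hk)) 2

end Combinatorics

section Bridge
open Finset
variable {N d : ℕ}

lemma gram_col (X : Matrix (Fin N) (Fin d) ℝ) (T : Finset (Fin d)) :
    gramDet X T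
      = (Matrix.of fun a b : T => (inner ℝ (_root_.col X (a : Fin d)) (_root_.col X (b : Fin d)) : ℝ)).det := by
  unfold gramDet
  congr 1
  ext a b; simp [Matrix.mul_apply, _root_.col, PiLp.inner_apply, mul_comm]

lemma gramDet_insert (X : Matrix (Fin N) (Fin d) ℝ) {T : Finset (Fin d)} {j : Fin d}
    (hj : j ∉ T) :
    gramDet X (insert j T) = gramDet X T *
      ‖_root_.col X j - (Submodule.orthogonalProjectionOnto (Submodule.span ℝ (_root_.col X '' ↑T)) (_root_.col X j) :
        EuclideanSpace ℝ (Fin N))‖ ^ 2 := by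
  rw [gram_col, gram_col]
  exact gram_insert (_root_.col X) T j hj

lemma projErr_eq (X : Matrix (Fin N) (Fin d) ℝ) (T : Finset (Fin d)) :
    projErr X T = ∑ j ∈ Tᶜ, ‖_root_.col X j -
      (Submodule.orthogonalProjectionOnto (Submodule.span ℝ (_root_.col X '' ↑T)) (_root_.col X j) :
        EuclideanSpace ℝ (Fin N))‖ ^ 2 := by
  unfold projErr
  rw [← Finset.sum_add_sum_compl T]
  have hz : ∑ j ∈ T, ‖_root_.col X j -
      (Submodule.orthogonalProjectionOnto (Submodule.span ℝ (_root_.col X '' ↑T)) (_root_.col X j) :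
        EuclideanSpace ℝ (Fin N))‖ ^ 2 = 0 := by
    refine Finset.sum_eq_zero fun j hj => ?_
    have hmem : _root_.col X j ∈ Submodule.span ℝ (_root_.col X '' ↑T) :=
      Submodule.subset_span ⟨j, Finset.mem_coe.mpr hj, rfl⟩
    rw [Submodule.coe_orthogonalProjectionOnto_apply, Submodule.starProjection_eq_self_iff.mpr hmem, sub_self]
    simp
  rw [hz, zero_add]

end Bridge

/-- **Volume sampling approximation guarantee** (Deshpande–Rademacher–Vempala–Wang,
Thm 1.3). If `S` is a `k`-subset of columns drawn with `P(S = T) ∝ det(X_{:T}ᵀX_{:T})`,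
then `E[‖X − Π_S X‖_Fr²] ≤ (k+1) ∑_{j>k} σ_j²`. Here `σ_1 ≥ … ≥ σ_r > 0` (1-indexed;
`σ` below is 0-indexed) are the singular values of `X`, pinned down by an orthonormal
eigenbasis `v` of `XᵀX`. -/
theorem volume_sampling_bound {N d : ℕ} (X : Matrix (Fin N) (Fin d) ℝ)
    (r k : ℕ) (hk : k ≤ r) (hrank : X.rank = r)
    (σ : ℕ → ℝ) (v : Fin d → Fin d → ℝ)
    (hσ_anti : ∀ i j : ℕ, i ≤ j → σ j ≤ σ i)
    (hσ_pos : ∀ j : ℕ, j < r → 0 < σ j)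
    (hσ_zero : ∀ j : ℕ, r ≤ j → σ j = 0)
    (hv_orth : ∀ i j, v i ⬝ᵥ v j = if i = j then (1 : ℝ) else 0)
    (hv_eig : ∀ j : Fin d, (Xᵀ * X) *ᵥ v j = (σ (j : ℕ) ^ 2) • v j) :
    (∑ T ∈ Finset.powersetCard k (Finset.univ : Finset (Fin d)), gramDet X T * projErr X T) /
      (∑ T ∈ Finset.powersetCard k (Finset.univ : Finset (Fin d)), gramDet X T)
    ≤ (k + 1 : ℝ) * ∑ j ∈ Finset.Ico k r, σ j ^ 2 := by
  classical
  have hrd : r ≤ d := by rw [← hrank]; exact Matrix.rank_le_width X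
  have hkd : k ≤ d := le_trans hk hrd
  have hnn : ∀ j, 0 ≤ σ j := by
    intro j
    by_cases h : j < r
    · exact (hσ_pos j h).le
    · rw [hσ_zero j (by omega)]
  have hden : ∑ T ∈ Finset.powersetCard k (Finset.univ : Finset (Fin d)), gramDet X T
      = ∑ T ∈ Finset.powersetCard k (Finset.univ : Finset (Fin d)), ∏ j ∈ T, σ (j : ℕ) ^ 2 :=
    sum_gramDet X σ v hv_orth hv_eig k
  have hdenpos : 0 < ∑ T ∈ Finset.powersetCard k (Finset.univ : Finset (Fin d)), gramDet X T := by
    rw [hden]; exact ek_pos σ hσ_pos hk hkd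
  have hnum : ∑ T ∈ Finset.powersetCard k (Finset.univ : Finset (Fin d)),
        gramDet X T * projErr X T
      = (k + 1 : ℝ) * ∑ S ∈ Finset.powersetCard (k+1) (Finset.univ : Finset (Fin d)),
          gramDet X S := by
    rw [← double_count (gramDet X)]
    refine Finset.sum_congr rfl fun T hT => ?_
    rw [projErr_eq, Finset.mul_sum]
    refine Finset.sum_congr rfl fun j hj => ?_
    exact (gramDet_insert X (Finset.mem_compl.mp hj)).symm
  rw [div_le_iff₀ hdenpos]
  calc ∑ T ∈ Finset.powersetCard k (Finset.univ : Finset (Fin d)), gramDet X T * projErr X T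
      = (k + 1 : ℝ) * ∑ S ∈ Finset.powersetCard (k+1) (Finset.univ : Finset (Fin d)),
          gramDet X S := hnum
    _ = (k + 1 : ℝ) * ∑ U ∈ Finset.powersetCard (k+1) (Finset.univ : Finset (Fin d)),
          ∏ j ∈ U, σ (j : ℕ) ^ 2 := by
        rw [sum_gramDet X σ v hv_orth hv_eig (k+1)]
    _ ≤ (k + 1 : ℝ) * ((∑ j ∈ Finset.Ico k r, σ j ^ 2) *
          ∑ T ∈ Finset.powersetCard k (Finset.univ : Finset (Fin d)),
            ∏ j ∈ T, σ (j : ℕ) ^ 2) := by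
        refine mul_le_mul_of_nonneg_left (esymm_step σ hnn hσ_zero hrd) (by positivity)
    _ = ((k + 1 : ℝ) * ∑ j ∈ Finset.Ico k r, σ j ^ 2) *
          ∑ T ∈ Finset.powersetCard k (Finset.univ : Finset (Fin d)),
            ∏ j ∈ T, σ (j : ℕ) ^ 2 := by ring
    _ = ((k + 1 : ℝ) * ∑ j ∈ Finset.Ico k r, σ j ^ 2) *
          ∑ T ∈ Finset.powersetCard k (Finset.univ : Finset (Fin d)), gramDet X T := by
        rw [hden]

end
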